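/- The map (L,ρ) ↦ I(L,ρ) is a bijection between the set of pairs consisting of a sublattice L of Γ_Z and a homomorphism ρ : L → K^×, and the set of proper binomial ideals of the quantum torus T_q. The inverse sends J to (L,ρ) with L = {α | x^α ∈ K^× + J} and ρ(α) the unique scalar with x^α − c(α)^{-1}ρ(α) ∈ J. -/

import Mathlib

/-- A quantum torus over `K` attached to a multiplicatively skew-symmetric matrix `q`:
an algebra `T` with basis `(x^α)_{α ∈ ℤⁿ}` and multiplication
`x^α x^β = d(α,β) x^{α+β}` where `d(α,β) = ∏_{i>j} q_{ij}^{α_i β_j}`. -/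
structure QuantumTorus (K : Type) [Field K] (n : ℕ) (T : Type) [Ring T] [Algebra K T] where
  q : Fin n → Fin n → Kˣ
  q_diag : ∀ i, q i i = 1
  q_skew : ∀ i j, q j i = (q i j)⁻¹
  d : (Fin n → ℤ) → (Fin n → ℤ) → Kˣ
  d_eq : ∀ α β, d α β = ∏ i : Fin n, ∏ j : Fin n,
      if (j : ℕ) < (i : ℕ) then q i j ^ (α i * β j) else 1
  x : (Fin n → ℤ) → T
  basis : Module.Basis (Fin n → ℤ) K T
  basis_eq : ∀ α, basis α = x α
  x_mul : ∀ α β, x α * x β = ((d α β : K)) • x (α + β)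
  x_zero : x 0 = 1

namespace QuantumTorus

variable {K : Type} [Field K] {n : ℕ} {T : Type} [Ring T] [Algebra K T]

/-- `α` lies in the central lattice `Γ_Z`, i.e. `x^α` is central in `T_q`. -/
def IsCentral (Q : QuantumTorus K n T) (α : Fin n → ℤ) : Prop :=
  ∀ t : T, Q.x α * t = t * Q.x α

/-- A binomial ideal: a two-sided ideal generated by nonzero elements
`λ x^α + μ x^β`. -/
def IsBinomialIdeal (Q : QuantumTorus K n T) (J : TwoSidedIdeal T) : Prop :=
  ∃ S : Set T,
    (∀ b ∈ S, b ≠ 0 ∧ ∃ (l m : K) (α β : Fin n → ℤ), b = l • Q.x α + m • Q.x β) ∧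
    J = TwoSidedIdeal.span S

/-- The scalars `c : Γ_Z → Kˣ` arising from a fixed algebra isomorphism
`φ : KΓ_Z ≅ Z(T_q)`, `φ(z_γ) = c(γ) x^γ`; the defining property is that
`γ ↦ c(γ) x^γ` is multiplicative on the central lattice and `c 0 = 1`. -/
def IsGoodC (Q : QuantumTorus K n T) (c : (Fin n → ℤ) → Kˣ) : Prop :=
  c 0 = 1 ∧ ∀ α β : Fin n → ℤ, Q.IsCentral α → Q.IsCentral β →
    (((c α : K)) • Q.x α) * (((c β : K)) • Q.x β) = ((c (α + β) : K)) • Q.x (α + β)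

/-- The binomial ideal `I(L,ρ) = ⟨ x^α - c(α)⁻¹ ρ(α) : α ∈ L ⟩`. -/
def binIdeal (Q : QuantumTorus K n T) (c : (Fin n → ℤ) → Kˣ)
    (L : AddSubgroup (Fin n → ℤ)) (ρ : L →+ Additive Kˣ) : TwoSidedIdeal T :=
  TwoSidedIdeal.span
    {t | ∃ α : L, t = Q.x (α : Fin n → ℤ) -
      ((((c (α : Fin n → ℤ))⁻¹ * Additive.toMul (ρ α) : Kˣ) : K)) • (1 : T)}

end QuantumTorus

/-- A (two-sided) prime ideal of a possibly noncommutative ring. -/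
def IsPrimeTSI {R : Type} [Ring R] (P : TwoSidedIdeal R) : Prop :=
  P ≠ ⊤ ∧ ∀ a b : R, (∀ r : R, a * r * b ∈ P) → a ∈ P ∨ b ∈ P

/-- The prime radical of a two-sided ideal: the intersection of the prime
two-sided ideals containing it. -/
def primeRadical {R : Type} [Ring R] (I : TwoSidedIdeal R) : TwoSidedIdeal R :=
  sInf {P : TwoSidedIdeal R | IsPrimeTSI P ∧ I ≤ P}

/- ---------------------------------------------------------------------- -/
/- Auxiliary development                                                   -/
/- ---------------------------------------------------------------------- -/

namespace QuantumTorus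

variable {K : Type} [Field K] {n : ℕ} {T : Type} [Ring T] [Algebra K T]
variable (Q : QuantumTorus K n T)

lemma x_ne_zero (α : Fin n → ℤ) : Q.x α ≠ 0 := by
  rw [← Q.basis_eq]; exact Q.basis.ne_zero α

lemma smul_x_inj {a b : K} {γ : Fin n → ℤ} (h : a • Q.x γ = b • Q.x γ) : a = b := by
  rw [← Q.basis_eq] at h
  have := congrArg (fun t => Q.basis.repr t γ) h
  simpa [Module.Basis.repr_self] using this

lemma d_add_left (α β γ : Fin n → ℤ) : Q.d (α + β) γ = Q.d α γ * Q.d β γ := by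
  rw [Q.d_eq, Q.d_eq, Q.d_eq, ← Finset.prod_mul_distrib]
  refine Finset.prod_congr rfl fun i _ => ?_
  rw [← Finset.prod_mul_distrib]
  refine Finset.prod_congr rfl fun j _ => ?_
  split_ifs with h
  · simp [Pi.add_apply, add_mul, zpow_add]
  · simp

lemma d_add_right (α β γ : Fin n → ℤ) : Q.d α (β + γ) = Q.d α β * Q.d α γ := by
  rw [Q.d_eq, Q.d_eq, Q.d_eq, ← Finset.prod_mul_distrib]
  refine Finset.prod_congr rfl fun i _ => ?_
  rw [← Finset.prod_mul_distrib]
  refine Finset.prod_congr rfl fun j _ => ?_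
  split_ifs with h
  · simp [Pi.add_apply, mul_add, zpow_add]
  · simp

lemma d_zero_left (β : Fin n → ℤ) : Q.d 0 β = 1 := by
  have := Q.d_add_left 0 0 β
  simpa using this.symm

lemma d_zero_right (β : Fin n → ℤ) : Q.d β 0 = 1 := by
  have := Q.d_add_right β 0 0
  simpa using this.symm

lemma d_neg_left (α β : Fin n → ℤ) : Q.d (-α) β = (Q.d α β)⁻¹ := by
  have h := Q.d_add_left α (-α) β
  rw [add_neg_cancel, Q.d_zero_left] at h
  exact eq_inv_of_mul_eq_one_left (by rw [mul_comm, ← h])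

lemma d_neg_right (α β : Fin n → ℤ) : Q.d α (-β) = (Q.d α β)⁻¹ := by
  have h := Q.d_add_right α β (-β)
  rw [add_neg_cancel, Q.d_zero_right] at h
  exact eq_inv_of_mul_eq_one_left (by rw [mul_comm, ← h])

/-- Membership is preserved by scalar multiplication. -/
lemma _root_.TwoSidedIdeal.smul_mem' (J : TwoSidedIdeal T) (k : K) {t : T}
    (h : t ∈ J) : k • t ∈ J := by
  rw [Algebra.smul_def]; exact J.mul_mem_left _ _ h

lemma _root_.TwoSidedIdeal.mem_of_smul_mem (J : TwoSidedIdeal T) {k : K} {t : T}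
    (hk : k ≠ 0) (h : k • t ∈ J) : t ∈ J := by
  have := J.smul_mem' k⁻¹ h
  rwa [smul_smul, inv_mul_cancel₀ hk, one_smul] at this

lemma eq_top_of_smul_x_mem (J : TwoSidedIdeal T) {k : K} {γ : Fin n → ℤ}
    (hk : k ≠ 0) (h : k • Q.x γ ∈ J) : J = ⊤ := by
  have h1 : (k • Q.x γ) * Q.x (-γ) ∈ J := J.mul_mem_right _ _ h
  rw [smul_mul_assoc, Q.x_mul, add_neg_cancel, Q.x_zero, smul_smul] at h1
  have h2 : (1 : T) ∈ J := by
    have hne : k * (Q.d γ (-γ) : K) ≠ 0 := by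
      exact mul_ne_zero hk (Units.ne_zero _)
    exact J.mem_of_smul_mem hne (by simpa using h1)
  exact TwoSidedIdeal.one_mem_iff J |>.mp h2

include Q in
lemma scalar_smul_one_eq_zero (J : TwoSidedIdeal T) (hJ : J ≠ ⊤) {k : K}
    (h : k • (1 : T) ∈ J) : k = 0 := by
  by_contra hk
  exact hJ (QuantumTorus.eq_top_of_smul_x_mem Q J hk (by rwa [Q.x_zero]))

include Q in
/-- Uniqueness of the scalar `lam` with `x^γ - lam • 1 ∈ J` for proper `J`. -/
lemma scalar_unique (J : TwoSidedIdeal T) (hJ : J ≠ ⊤) {γ : Fin n → ℤ} {a b : K}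
    (ha : Q.x γ - a • (1 : T) ∈ J) (hb : Q.x γ - b • (1 : T) ∈ J) : a = b := by
  have h : (b - a) • (1 : T) ∈ J := by
    have := J.sub_mem ha hb
    rw [sub_sub_sub_cancel_left, ← sub_smul] at this
    exact this
  exact (sub_eq_zero.mp (QuantumTorus.scalar_smul_one_eq_zero Q J hJ h)).symm

lemma isCentral_of_d_symm {α : Fin n → ℤ} (h : ∀ β, Q.d α β = Q.d β α) :
    Q.IsCentral α := by
  intro t
  have hfg : LinearMap.mulLeft K (Q.x α) = LinearMap.mulRight K (Q.x α) := by
    apply Q.basis.ext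
    intro β
    simp only [LinearMap.mulLeft_apply, LinearMap.mulRight_apply, Q.basis_eq]
    rw [Q.x_mul, Q.x_mul, add_comm, h β]
  have := congrFun (congrArg DFunLike.coe hfg) t
  simpa using this

lemma d_symm_of_isCentral {α : Fin n → ℤ} (h : Q.IsCentral α) (β : Fin n → ℤ) :
    Q.d α β = Q.d β α := by
  have := h (Q.x β)
  rw [Q.x_mul, Q.x_mul, add_comm β α] at this
  exact Units.ext (Q.smul_x_inj this)

/-- If a proper two-sided ideal contains `x^α - lam • 1`, then `α` is central. -/
lemma isCentral_of_mem_proper (J : TwoSidedIdeal T) (hJ : J ≠ ⊤)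
    {α : Fin n → ℤ} {a : K} (h : Q.x α - a • (1 : T) ∈ J) : Q.IsCentral α := by
  refine Q.isCentral_of_d_symm fun β => ?_
  by_contra hne
  have h1 : Q.x β * (Q.x α - a • (1 : T)) - (Q.x α - a • (1 : T)) * Q.x β ∈ J :=
    J.sub_mem (J.mul_mem_left _ _ h) (J.mul_mem_right _ _ h)
  have h2 : Q.x β * (Q.x α - a • (1 : T)) - (Q.x α - a • (1 : T)) * Q.x β
      = ((Q.d β α : K) - (Q.d α β : K)) • Q.x (α + β) := by
    rw [mul_sub, sub_mul, Q.x_mul, Q.x_mul, add_comm β α, mul_smul_comm, smul_mul_assoc,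
      mul_one, one_mul, sub_smul]
    abel
  rw [h2] at h1
  have hne' : (Q.d β α : K) - (Q.d α β : K) ≠ 0 := by
    intro h0
    exact hne (Units.ext (sub_eq_zero.mp h0)).symm
  exact hJ (Q.eq_top_of_smul_x_mem J hne' h1)

section GoodC

variable (c : (Fin n → ℤ) → Kˣ)

include Q in
lemma c_add (hc : Q.IsGoodC c) {α β : Fin n → ℤ} (hα : Q.IsCentral α)
    (hβ : Q.IsCentral β) : c (α + β) = c α * c β * Q.d α β := by
  have h := hc.2 α β hα hβ
  rw [smul_mul_assoc, mul_smul_comm, smul_smul, Q.x_mul, smul_smul] at h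
  exact Units.ext (Q.smul_x_inj h).symm

variable {L : AddSubgroup (Fin n → ℤ)} (ρ : L →+ Additive Kˣ)

/-- The scalar `λ_α = c(α)⁻¹ ρ(α)` attached to `α ∈ L`. -/
def lamu (α : L) : Kˣ := (c (α : Fin n → ℤ))⁻¹ * Additive.toMul (ρ α)

include Q in
lemma lamu_add (hc : Q.IsGoodC c) (hL : ∀ α ∈ L, Q.IsCentral α) (α β : L) :
    lamu c ρ (α + β) = (Q.d (α : Fin n → ℤ) (β : Fin n → ℤ))⁻¹ *
      lamu c ρ α * lamu c ρ β := by
  have hca : c ((α : Fin n → ℤ) + (β : Fin n → ℤ))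
      = c α * c β * Q.d (α : Fin n → ℤ) (β : Fin n → ℤ) :=
    Q.c_add c hc (hL _ α.2) (hL _ β.2)
  have hρ : Additive.toMul (ρ (α + β)) = Additive.toMul (ρ α) * Additive.toMul (ρ β) := by
    rw [map_add]; rfl
  show (c ((α + β : L) : Fin n → ℤ))⁻¹ * Additive.toMul (ρ (α + β)) = _
  have hco : ((α + β : L) : Fin n → ℤ) = (α : Fin n → ℤ) + (β : Fin n → ℤ) := rfl
  rw [hco, hca, hρ, lamu, lamu]
  apply Units.ext
  simp only [Units.val_mul, Units.val_inv_eq_inv_val]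
  field_simp

open scoped Classical in
/-- The coefficient function of the `K`-linear functional killing `I(L,ρ)`. -/
noncomputable def chi : (Fin n → ℤ) → K := fun γ =>
  if h : γ ∈ L then (lamu c ρ ⟨γ, h⟩ : K) else 0

/-- The `K`-linear functional on `T` with `ψ(x^γ) = χ(γ)`. -/
noncomputable def psi : T →ₗ[K] K := Q.basis.constr ℕ (chi c ρ)

lemma psi_x (γ : Fin n → ℤ) : Q.psi c ρ (Q.x γ) = chi c ρ γ := by
  rw [← Q.basis_eq, psi, Module.Basis.constr_basis]

lemma chi_mem {γ : Fin n → ℤ} (h : γ ∈ L) : chi c ρ γ = (lamu c ρ ⟨γ, h⟩ : K) := by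
  rw [chi, dif_pos h]

lemma chi_not_mem {γ : Fin n → ℤ} (h : ¬ γ ∈ L) : chi c ρ γ = 0 := by
  rw [chi, dif_neg h]

lemma psi_mul_gen (hc : Q.IsGoodC c) (hL : ∀ α ∈ L, Q.IsCentral α) (α : L) (w : T) :
    Q.psi c ρ (w * (Q.x (α : Fin n → ℤ) - (lamu c ρ α : K) • (1 : T))) = 0 := by
  have hmap : (Q.psi c ρ).comp
      (LinearMap.mulRight K (Q.x (α : Fin n → ℤ) - (lamu c ρ α : K) • (1 : T))) = 0 := by
    apply Q.basis.ext
    intro β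
    simp only [LinearMap.comp_apply, LinearMap.mulRight_apply, LinearMap.zero_apply,
      Q.basis_eq]
    rw [mul_sub, Q.x_mul, mul_smul_comm, mul_one, map_sub, map_smul, map_smul,
      psi_x, psi_x, smul_eq_mul, smul_eq_mul]
    by_cases hβ : β ∈ L
    · have hmem : β + (α : Fin n → ℤ) ∈ L := L.add_mem hβ α.2
      rw [chi_mem c ρ hmem, chi_mem c ρ hβ]
      have h1 : (⟨β + (α : Fin n → ℤ), hmem⟩ : L) = ⟨β, hβ⟩ + α := rfl
      rw [h1, Q.lamu_add c ρ hc hL]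
      simp only [Units.val_mul, Units.val_inv_eq_inv_val]
      field_simp
      ring
    · have hmem : ¬ (β + (α : Fin n → ℤ) ∈ L) := fun h =>
        hβ (by simpa using L.sub_mem h α.2)
      rw [chi_not_mem c ρ hmem, chi_not_mem c ρ hβ]
      simp
  have := congrFun (congrArg DFunLike.coe hmap) w
  simpa using this

lemma _root_.TwoSidedIdeal.span_le' {s : Set T} {I : TwoSidedIdeal T}
    (h : s ⊆ I) : TwoSidedIdeal.span s ≤ I :=
  fun _ hx => TwoSidedIdeal.mem_span_iff.mp hx I h

lemma gen_mem_binIdeal (α : L) :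
    Q.x (α : Fin n → ℤ) - (lamu c ρ α : K) • (1 : T) ∈ Q.binIdeal c L ρ :=
  TwoSidedIdeal.subset_span ⟨α, rfl⟩

lemma psi_eq_zero_of_mem_binIdeal (hc : Q.IsGoodC c) (hL : ∀ α ∈ L, Q.IsCentral α)
    {t : T} (ht : t ∈ Q.binIdeal c L ρ) (r s : T) : Q.psi c ρ (r * t * s) = 0 := by
  let P : TwoSidedIdeal T := TwoSidedIdeal.mk'
    {t : T | ∀ r s : T, Q.psi c ρ (r * t * s) = 0}
    (fun r s => by simp)
    (fun {a b} ha hb r s => by rw [mul_add, add_mul, map_add, ha, hb, add_zero])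
    (fun {a} ha r s => by rw [mul_neg, neg_mul, map_neg, ha, neg_zero])
    (fun {a b} hb r s => by simpa [mul_assoc] using hb (r * a) s)
    (fun {a b} ha r s => by simpa [mul_assoc] using ha r (b * s))
  have hP : t ∈ P := by
    refine TwoSidedIdeal.span_le' (I := P) ?_ ht
    rintro _ ⟨α, rfl⟩
    rw [SetLike.mem_coe, TwoSidedIdeal.mem_mk']
    intro r s
    have hcen : Q.IsCentral (α : Fin n → ℤ) := hL _ α.2
    have hcomm : (Q.x (α : Fin n → ℤ) -
        (((c (α : Fin n → ℤ))⁻¹ * Additive.toMul (ρ α) : Kˣ) : K) • (1 : T)) * s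
        = s * (Q.x (α : Fin n → ℤ) -
        (((c (α : Fin n → ℤ))⁻¹ * Additive.toMul (ρ α) : Kˣ) : K) • (1 : T)) := by
      rw [sub_mul, mul_sub, hcen s, smul_mul_assoc, mul_smul_comm, one_mul, mul_one]
    rw [mul_assoc, hcomm, ← mul_assoc]
    exact Q.psi_mul_gen c ρ hc hL α (r * s)
  rw [TwoSidedIdeal.mem_mk'] at hP
  exact hP r s

lemma lamu_zero (hc : Q.IsGoodC c) : lamu c ρ 0 = 1 := by
  have h0 : ((0 : L) : Fin n → ℤ) = 0 := rfl
  rw [lamu, h0, hc.1, map_zero, toMul_zero]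
  simp

lemma psi_one (hc : Q.IsGoodC c) : Q.psi c ρ (1 : T) = 1 := by
  rw [← Q.x_zero, psi_x, chi_mem c ρ L.zero_mem]
  have : (⟨(0 : Fin n → ℤ), L.zero_mem⟩ : L) = 0 := rfl
  rw [this, Q.lamu_zero c ρ hc, Units.val_one]

lemma binIdeal_proper (hc : Q.IsGoodC c) (hL : ∀ α ∈ L, Q.IsCentral α) :
    Q.binIdeal c L ρ ≠ ⊤ := by
  intro h
  have h1 : (1 : T) ∈ Q.binIdeal c L ρ := by rw [h]; trivial
  have h2 := Q.psi_eq_zero_of_mem_binIdeal c ρ hc hL h1 1 1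
  rw [one_mul, mul_one, Q.psi_one c ρ hc] at h2
  exact one_ne_zero h2

lemma mem_of_sub_smul_mem_binIdeal (hc : Q.IsGoodC c) (hL : ∀ α ∈ L, Q.IsCentral α)
    {γ : Fin n → ℤ} {mu : Kˣ} (h : Q.x γ - (mu : K) • (1 : T) ∈ Q.binIdeal c L ρ) :
    ∃ hγ : γ ∈ L, mu = lamu c ρ ⟨γ, hγ⟩ := by
  have h2 := Q.psi_eq_zero_of_mem_binIdeal c ρ hc hL h 1 1
  rw [one_mul, mul_one, map_sub, map_smul, psi_x, Q.psi_one c ρ hc, smul_eq_mul,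
    mul_one, sub_eq_zero] at h2
  by_cases hγ : γ ∈ L
  · refine ⟨hγ, ?_⟩
    apply Units.ext
    rw [← h2, chi_mem c ρ hγ]
  · rw [chi_not_mem c ρ hγ] at h2
    exact absurd h2.symm mu.ne_zero

lemma char_binIdeal (hc : Q.IsGoodC c) (hL : ∀ α ∈ L, Q.IsCentral α) :
    {α : Fin n → ℤ | ∃ lam : Kˣ, Q.x α - (lam : K) • (1 : T) ∈ Q.binIdeal c L ρ}
      = (L : Set (Fin n → ℤ)) := by
  ext γ
  constructor
  · rintro ⟨lam, hlam⟩
    exact (Q.mem_of_sub_smul_mem_binIdeal c ρ hc hL hlam).1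
  · intro hγ
    exact ⟨lamu c ρ ⟨γ, hγ⟩, Q.gen_mem_binIdeal c ρ ⟨γ, hγ⟩⟩

lemma sub_smul_one_ne_zero {γ : Fin n → ℤ} (hγ : γ ≠ 0) (k : K) :
    Q.x γ - k • (1 : T) ≠ 0 := by
  intro h
  rw [sub_eq_zero, ← Q.x_zero, ← Q.basis_eq, ← Q.basis_eq] at h
  have := congrArg (fun t => Q.basis.repr t γ) h
  simp only [Module.Basis.repr_self, map_smul] at this
  rw [Finsupp.single_eq_same] at this
  rw [Finsupp.smul_apply, Finsupp.single_eq_of_ne hγ] at this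
  simp at this

lemma binIdeal_binomial : Q.IsBinomialIdeal (Q.binIdeal c L ρ) := by
  classical
  set S0 : Set T := {t | ∃ α : L, t = Q.x (α : Fin n → ℤ) -
      ((((c (α : Fin n → ℤ))⁻¹ * Additive.toMul (ρ α) : Kˣ) : K)) • (1 : T)} with hS0
  refine ⟨S0 \ {0}, ?_, ?_⟩
  · rintro b ⟨⟨α, rfl⟩, hb0⟩
    refine ⟨hb0, 1, -((((c (α : Fin n → ℤ))⁻¹ * Additive.toMul (ρ α) : Kˣ) : K)),
      (α : Fin n → ℤ), 0, ?_⟩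
    rw [Q.x_zero, one_smul, neg_smul, sub_eq_add_neg]
  · refine le_antisymm ?_ (TwoSidedIdeal.span_mono Set.diff_subset)
    refine TwoSidedIdeal.span_le' fun t ht => ?_
    by_cases h0 : t = 0
    · rw [h0, SetLike.mem_coe]; exact TwoSidedIdeal.zero_mem _
    · exact TwoSidedIdeal.subset_span ⟨ht, h0⟩

end GoodC

section Inverse

variable (c : (Fin n → ℤ) → Kˣ) (J : TwoSidedIdeal T)

/-- combination trick: if `x^α - a•1, x^β - b•1 ∈ J` then
`x^{α+β} - (d(α,β)⁻¹ a b)•1 ∈ J`. -/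
lemma sub_mem_trick {α β : Fin n → ℤ} {a b : K}
    (ha : Q.x α - a • (1 : T) ∈ J) (hb : Q.x β - b • (1 : T) ∈ J) :
    Q.x (α + β) - ((Q.d α β : K)⁻¹ * a * b) • (1 : T) ∈ J := by
  have h1 : Q.x α * (Q.x β - b • (1 : T)) + b • (Q.x α - a • (1 : T)) ∈ J :=
    J.add_mem (J.mul_mem_left _ _ hb) (J.smul_mem' b ha)
  have h2 : Q.x α * (Q.x β - b • (1 : T)) + b • (Q.x α - a • (1 : T))
      = (Q.d α β : K) • Q.x (α + β) - (a * b) • (1 : T) := by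
    rw [mul_sub, Q.x_mul, mul_smul_comm, mul_one, smul_sub, smul_smul, mul_comm b a]
    abel
  rw [h2] at h1
  have h3 := J.smul_mem' ((Q.d α β : K)⁻¹) h1
  rw [smul_sub, smul_smul, smul_smul, inv_mul_cancel₀ (Units.ne_zero _), one_smul] at h3
  rwa [← mul_assoc] at h3

lemma sub_mem_neg {α : Fin n → ℤ} {a : Kˣ}
    (ha : Q.x α - (a : K) • (1 : T) ∈ J) :
    Q.x (-α) - ((a : K)⁻¹ * (Q.d (-α) α : K)) • (1 : T) ∈ J := by
  have h1 : Q.x (-α) * (Q.x α - (a : K) • (1 : T)) ∈ J := J.mul_mem_left _ _ ha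
  rw [mul_sub, Q.x_mul, neg_add_cancel, Q.x_zero, mul_smul_comm, mul_one] at h1
  have h2 := J.smul_mem' ((a : K)⁻¹) (J.neg_mem h1)
  rwa [neg_sub, smul_sub, smul_smul, smul_smul, inv_mul_cancel₀ (Units.ne_zero a),
    one_smul] at h2

/-- The lattice recovered from a two-sided ideal `J`. -/
def latJ : AddSubgroup (Fin n → ℤ) where
  carrier := {α | ∃ lam : Kˣ, Q.x α - (lam : K) • (1 : T) ∈ J}
  zero_mem' := ⟨1, by simp [Q.x_zero]⟩
  add_mem' := by
    rintro α β ⟨a, ha⟩ ⟨b, hb⟩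
    exact ⟨(Q.d α β)⁻¹ * a * b, by
      have := Q.sub_mem_trick J ha hb
      simpa [Units.val_mul, Units.val_inv_eq_inv_val] using this⟩
  neg_mem' := by
    rintro α ⟨a, ha⟩
    exact ⟨a⁻¹ * Q.d (-α) α, by
      have := Q.sub_mem_neg J ha
      simpa [Units.val_mul, Units.val_inv_eq_inv_val] using this⟩

lemma latJ_central (hJ : J ≠ ⊤) : ∀ α ∈ Q.latJ J, Q.IsCentral α := by
  rintro α ⟨a, ha⟩
  exact Q.isCentral_of_mem_proper J hJ ha

/-- The chosen scalar `lam` with `x^α - lam • 1 ∈ J` for `α` in the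
recovered lattice. -/
noncomputable def lamJ (α : Q.latJ J) : Kˣ := Classical.choose α.2

lemma lamJ_spec (α : Q.latJ J) :
    Q.x (α : Fin n → ℤ) - (Q.lamJ J α : K) • (1 : T) ∈ J :=
  Classical.choose_spec α.2

lemma lamJ_unique (hJ : J ≠ ⊤) {α : Q.latJ J} {mu : Kˣ}
    (h : Q.x (α : Fin n → ℤ) - (mu : K) • (1 : T) ∈ J) : mu = Q.lamJ J α :=
  Units.ext (Q.scalar_unique J hJ h (Q.lamJ_spec J α))

lemma lamJ_add (hJ : J ≠ ⊤) (α β : Q.latJ J) :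
    Q.lamJ J (α + β) = (Q.d (α : Fin n → ℤ) (β : Fin n → ℤ))⁻¹ *
      Q.lamJ J α * Q.lamJ J β := by
  refine (Q.lamJ_unique J hJ ?_).symm
  have := Q.sub_mem_trick J (Q.lamJ_spec J α) (Q.lamJ_spec J β)
  simpa [Units.val_mul, Units.val_inv_eq_inv_val] using this

lemma lamJ_zero (hJ : J ≠ ⊤) : Q.lamJ J 0 = 1 := by
  refine (Q.lamJ_unique J hJ ?_).symm
  show Q.x 0 - ((1 : Kˣ) : K) • (1 : T) ∈ J
  rw [Q.x_zero, Units.val_one, one_smul, sub_self]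
  exact J.zero_mem

/-- The character recovered from `J`. -/
noncomputable def rhoJ (hJ : J ≠ ⊤) (hc : Q.IsGoodC c) :
    Q.latJ J →+ Additive Kˣ where
  toFun := fun α => Additive.ofMul (c (α : Fin n → ℤ) * Q.lamJ J α)
  map_zero' := by
    show Additive.ofMul (c 0 * Q.lamJ J 0) = 0
    rw [hc.1, Q.lamJ_zero J hJ, one_mul]
    rfl
  map_add' := by
    intro α β
    have hco : ((α + β : Q.latJ J) : Fin n → ℤ) = (α : Fin n → ℤ) + (β : Fin n → ℤ) := rfl
    have hca : c ((α : Fin n → ℤ) + (β : Fin n → ℤ))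
        = c (α : Fin n → ℤ) * c (β : Fin n → ℤ) * Q.d (α : Fin n → ℤ) (β : Fin n → ℤ) :=
      Q.c_add c hc (Q.latJ_central J hJ _ α.2) (Q.latJ_central J hJ _ β.2)
    have hgoal : c ((α + β : Q.latJ J) : Fin n → ℤ) * Q.lamJ J (α + β)
        = (c (α : Fin n → ℤ) * Q.lamJ J α) * (c (β : Fin n → ℤ) * Q.lamJ J β) := by
      rw [hco, hca, Q.lamJ_add J hJ α β]
      apply Units.ext
      simp only [Units.val_mul, Units.val_inv_eq_inv_val]
      field_simp
    show Additive.ofMul (c ((α + β : Q.latJ J) : Fin n → ℤ) * Q.lamJ J (α + β)) = _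
    rw [hgoal, ofMul_mul]

lemma lamu_rhoJ (hJ : J ≠ ⊤) (hc : Q.IsGoodC c) (α : Q.latJ J) :
    lamu c (Q.rhoJ c J hJ hc) α = Q.lamJ J α := by
  rw [lamu]
  show (c (α : Fin n → ℤ))⁻¹ *
    Additive.toMul (Additive.ofMul (c (α : Fin n → ℤ) * Q.lamJ J α)) = _
  rw [toMul_ofMul, inv_mul_cancel_left]

lemma binomial_mem_binIdeal (hJ : J ≠ ⊤) (hc : Q.IsGoodC c) {l m : K}
    {α β : Fin n → ℤ} (hbJ : l • Q.x α + m • Q.x β ∈ J)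
    (hb0 : l • Q.x α + m • Q.x β ≠ (0 : T)) :
    l • Q.x α + m • Q.x β ∈ Q.binIdeal c (Q.latJ J) (Q.rhoJ c J hJ hc) := by
  by_cases hl : l = 0
  · exfalso
    subst hl
    rw [zero_smul, zero_add] at hbJ hb0
    have hm : m ≠ 0 := fun h => hb0 (by rw [h, zero_smul])
    exact hJ (Q.eq_top_of_smul_x_mem J hm hbJ)
  by_cases hm : m = 0
  · exfalso
    subst hm
    rw [zero_smul, add_zero] at hbJ
    exact hJ (Q.eq_top_of_smul_x_mem J hl hbJ)
  by_cases hab : α = β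
  · exfalso
    subst hab
    rw [← add_smul] at hbJ hb0
    have hlm : l + m ≠ 0 := fun h => hb0 (by rw [h, zero_smul])
    exact hJ (Q.eq_top_of_smul_x_mem J hlm hbJ)
  -- main case
  have hu0 : l * (Q.d (-β) α : K) ≠ 0 := mul_ne_zero hl (Units.ne_zero _)
  set u : K := l * (Q.d (-β) α : K) with hu
  set ν : K := -(u⁻¹ * (m * (Q.d (-β) β : K))) with hν
  have hν0 : ν ≠ 0 := by
    rw [hν]
    exact neg_ne_zero.mpr (mul_ne_zero (inv_ne_zero hu0)
      (mul_ne_zero hm (Units.ne_zero _)))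
  have hxx : u⁻¹ • (Q.x (-β) * (l • Q.x α + m • Q.x β))
      = Q.x (α - β) - ν • (1 : T) := by
    rw [mul_add, mul_smul_comm, mul_smul_comm, Q.x_mul, Q.x_mul, neg_add_cancel,
      Q.x_zero, smul_smul, smul_smul, smul_add, smul_smul, smul_smul, neg_add_eq_sub]
    have h1 : u⁻¹ * (l * (Q.d (-β) α : K)) = 1 := by
      rw [hu]; field_simp
    rw [h1, one_smul, hν, neg_smul, sub_neg_eq_add]
  have hgen : Q.x (α - β) - ν • (1 : T) ∈ J := by
    rw [← hxx]
    exact J.smul_mem' _ (J.mul_mem_left _ _ hbJ)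
  have hγL : α - β ∈ Q.latJ J := ⟨Units.mk0 ν hν0, hgen⟩
  have hνlam : Units.mk0 ν hν0 = Q.lamJ J ⟨α - β, hγL⟩ := Q.lamJ_unique J hJ hgen
  have e2 : -(l * (Q.d β (α - β) : K)⁻¹ * ν) = m := by
    have hd : (Q.d β (α - β) : K) = (Q.d β α : K) * (Q.d β β : K)⁻¹ := by
      rw [sub_eq_add_neg, Q.d_add_right, Q.d_neg_right]
      simp [Units.val_mul, Units.val_inv_eq_inv_val]
    have hd2 : (Q.d (-β) α : K) = (Q.d β α : K)⁻¹ := by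
      rw [Q.d_neg_left]; simp [Units.val_inv_eq_inv_val]
    have hd3 : (Q.d (-β) β : K) = (Q.d β β : K)⁻¹ := by
      rw [Q.d_neg_left]; simp [Units.val_inv_eq_inv_val]
    rw [hν, hu, hd, hd2, hd3]
    field_simp
  have hkey : l • Q.x α + m • Q.x β
      = (l * (Q.d β (α - β) : K)⁻¹) • (Q.x β * (Q.x (α - β) - ν • (1 : T))) := by
    rw [mul_sub, Q.x_mul, mul_smul_comm, mul_one, smul_sub, smul_smul, smul_smul]
    have hβγ : β + (α - β) = α := by abel
    rw [hβγ]
    have e1 : l * (Q.d β (α - β) : K)⁻¹ * (Q.d β (α - β) : K) = l := by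
      field_simp
    rw [e1, show l * (Q.d β (α - β) : K)⁻¹ * ν = -m from by
      rw [← e2]; ring, neg_smul, sub_neg_eq_add]
  rw [hkey]
  have hg : Q.x (α - β) - ν • (1 : T)
      ∈ Q.binIdeal c (Q.latJ J) (Q.rhoJ c J hJ hc) := by
    have h3 := Q.gen_mem_binIdeal c (Q.rhoJ c J hJ hc) ⟨α - β, hγL⟩
    rw [Q.lamu_rhoJ c J hJ hc, ← hνlam] at h3
    exact h3
  exact TwoSidedIdeal.smul_mem' _ _ (TwoSidedIdeal.mul_mem_left _ _ _ hg)

lemma binIdeal_latJ (hJ : J ≠ ⊤) (hc : Q.IsGoodC c) (hbin : Q.IsBinomialIdeal J) :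
    Q.binIdeal c (Q.latJ J) (Q.rhoJ c J hJ hc) = J := by
  obtain ⟨S, hSform, hSspan⟩ := hbin
  refine le_antisymm ?_ ?_
  · refine TwoSidedIdeal.span_le' ?_
    rintro t ⟨α, rfl⟩
    have h2 := Q.lamJ_spec J α
    rw [← Q.lamu_rhoJ c J hJ hc α] at h2
    exact h2
  · have hle : TwoSidedIdeal.span S ≤ Q.binIdeal c (Q.latJ J) (Q.rhoJ c J hJ hc) := by
      refine TwoSidedIdeal.span_le' fun t ht => ?_
      obtain ⟨hb0, l, m, α, β, hform⟩ := hSform t ht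
      have hbJ : t ∈ J := by
        rw [hSspan]; exact TwoSidedIdeal.subset_span ht
      rw [hform] at hbJ hb0 ⊢
      exact Q.binomial_mem_binIdeal c J hJ hc hbJ hb0
    exact hSspan ▸ hle

end Inverse

end QuantumTorus

/-- The assignment `(L,ρ) ↦ I(L,ρ)` is a bijection from pairs of a sublattice
`L ≤ Γ_Z` together with `ρ ∈ Hom(L,Kˣ)` onto the proper binomial ideals of
`T_q`; the inverse sends `J` to `(L,ρ)` with `L = {α : x^α ∈ Kˣ + J}` and
`x^α - c(α)⁻¹ρ(α) ∈ J` for `α ∈ L`. -/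
theorem binIdeal_bijection {K : Type} [Field K] {n : ℕ} {T : Type} [Ring T]
    [Algebra K T] (Q : QuantumTorus K n T) (c : (Fin n → ℤ) → Kˣ) (hc : Q.IsGoodC c) :
    ∃ F : (Σ L : {L : AddSubgroup (Fin n → ℤ) // ∀ α ∈ L, Q.IsCentral α},
            (L.1 →+ Additive Kˣ)) ≃
          {J : TwoSidedIdeal T // J ≠ ⊤ ∧ Q.IsBinomialIdeal J},
      (∀ p, (F p : TwoSidedIdeal T) = Q.binIdeal c p.1.1 p.2) ∧
      (∀ J : {J : TwoSidedIdeal T // J ≠ ⊤ ∧ Q.IsBinomialIdeal J},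
        (((F.symm J).1.1 : Set (Fin n → ℤ)) =
          {α | ∃ lam : Kˣ, Q.x α - ((lam : K)) • (1 : T) ∈ (J : TwoSidedIdeal T)}) ∧
        ∀ α (hα : α ∈ (F.symm J).1.1),
          Q.x α - ((((c α)⁻¹ * Additive.toMul ((F.symm J).2 ⟨α, hα⟩) : Kˣ) : K)) • (1 : T)
            ∈ (J : TwoSidedIdeal T)) := by
  classical
  let F0 : (Σ L : {L : AddSubgroup (Fin n → ℤ) // ∀ α ∈ L, Q.IsCentral α},
      (L.1 →+ Additive Kˣ)) → {J : TwoSidedIdeal T // J ≠ ⊤ ∧ Q.IsBinomialIdeal J} :=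
    fun p => ⟨Q.binIdeal c p.1.1 p.2,
      Q.binIdeal_proper c p.2 hc p.1.2,
      Q.binIdeal_binomial c p.2⟩
  have hinj : Function.Injective F0 := by
    rintro ⟨⟨L, hL⟩, ρ⟩ ⟨⟨L', hL'⟩, ρ'⟩ h
    have hII : Q.binIdeal c L ρ = Q.binIdeal c L' ρ' := congrArg Subtype.val h
    have hLL : L = L' := by
      apply SetLike.ext'
      rw [← QuantumTorus.char_binIdeal Q c ρ hc hL, hII,
        QuantumTorus.char_binIdeal Q c ρ' hc hL']
    subst hLL
    have hρ : ρ = ρ' := by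
      ext γ
      have h1 := Q.gen_mem_binIdeal c ρ' γ
      rw [← hII] at h1
      obtain ⟨hγ2, heq⟩ := Q.mem_of_sub_smul_mem_binIdeal c ρ hc hL h1
      have hsub : (⟨(γ : Fin n → ℤ), hγ2⟩ : L) = γ := Subtype.ext rfl
      rw [hsub] at heq
      rw [QuantumTorus.lamu, QuantumTorus.lamu] at heq
      have h3 := mul_left_cancel heq
      exact congrArg Units.val h3.symm
    subst hρ
    rfl
  have hsurj : Function.Surjective F0 := by
    rintro ⟨J, hJtop, hJbin⟩
    refine ⟨⟨⟨Q.latJ J, Q.latJ_central J hJtop⟩, Q.rhoJ c J hJtop hc⟩, ?_⟩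
    exact Subtype.ext (Q.binIdeal_latJ c J hJtop hc hJbin)
  refine ⟨Equiv.ofBijective F0 ⟨hinj, hsurj⟩, fun p => rfl, fun J => ?_⟩
  set p := (Equiv.ofBijective F0 ⟨hinj, hsurj⟩).symm J with hp
  have hFp : F0 p = J := (Equiv.ofBijective F0 ⟨hinj, hsurj⟩).apply_symm_apply J
  have hId : Q.binIdeal c p.1.1 p.2 = (J : TwoSidedIdeal T) := congrArg Subtype.val hFp
  constructor
  · rw [← hId]
    exact (QuantumTorus.char_binIdeal Q c p.2 hc p.1.2).symm
  · intro α hα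
    have h4 := Q.gen_mem_binIdeal c p.2 ⟨α, hα⟩
    rw [hId] at h4
    exact h4
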